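/- Let δ, δ' ∈ R^d with v = δ' - δ satisfying ‖v‖_1 ≤ Δ, and let ε > 0. Suppose for each coordinate i the quantization parameter satisfies b_i ≥ max(|δ_i|, |δ'_i|) + (1 + 1/ε)Δ. Then the randomized mechanism outputting independent bits c_i ∈ {-1,1} with P(c_i = 1 | x) = (b_i + x_i)/(2b_i) satisfies: for every bit string c ∈ {-1,1}^d, P(c | δ') ≤ e^ε · P(c | δ). That is, the mechanism is (ε, 0)-differentially private with respect to inputs δ and δ'. -/
import Mathlib


/-- `(ε,0)`-differential privacy of the stochastic one-bit compressor: for adjacent inputs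
`δ, δ'` with `‖δ' - δ‖₁ ≤ Δ` and quantization parameters
`b_i ≥ max(|δ_i|, |δ'_i|) + (1 + 1/ε)Δ`, the probability of any output bit string `c`
satisfies `P(c | δ') ≤ e^ε · P(c | δ)`, where
`P(c | x) = ∏ i, (b_i + c_i·x_i)/(2b_i)` for `c_i ∈ {-1, 1}`. -/
theorem stmt7 (d : ℕ) (ε Δ : ℝ) (hε : 0 < ε)
    (δ δ' b : Fin d → ℝ)
    (hsens : ∑ i, |δ' i - δ i| ≤ Δ)
    (hb : ∀ i, b i ≥ max |δ i| |δ' i| + (1 + 1 / ε) * Δ) :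
    ∀ c : Fin d → ℝ, (∀ i, c i = 1 ∨ c i = -1) →
      (∏ i, (if c i = 1 then (b i + δ' i) / (2 * b i) else (b i - δ' i) / (2 * b i)))
        ≤ Real.exp ε *
          ∏ i, (if c i = 1 then (b i + δ i) / (2 * b i) else (b i - δ i) / (2 * b i)) := by
  intro c hc
  have hΔ0 : 0 ≤ Δ := le_trans (Finset.sum_nonneg fun i _ => abs_nonneg _) hsens
  rcases eq_or_lt_of_le hΔ0 with hΔ | hΔ
  · -- Δ = 0 : then δ' = δ
    have hzero : ∀ i ∈ Finset.univ, |δ' i - δ i| = 0 := by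
      intro i _
      exact (Finset.sum_eq_zero_iff_of_nonneg (fun i _ => abs_nonneg (δ' i - δ i))).mp
        (le_antisymm (hΔ ▸ hsens) (Finset.sum_nonneg fun i _ => abs_nonneg _)) i
        (Finset.mem_univ i)
    have heq : δ' = δ := by
      funext i
      have h := abs_eq_zero.mp (hzero i (Finset.mem_univ i))
      linarith
    subst heq
    have hprod : 0 ≤ ∏ i, (if c i = 1 then (b i + δ' i) / (2 * b i) else (b i - δ' i) / (2 * b i)) := by
      apply Finset.prod_nonneg
      intro i _
      have hbi : |δ' i| ≤ b i := by
        have h1 := hb i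
        have h2 : |δ' i| ≤ max |δ' i| |δ' i| := le_max_left _ _
        have h3 : (0:ℝ) ≤ (1 + 1/ε) * Δ := by positivity
        linarith [le_max_right |δ' i| |δ' i| |>.trans (le_refl _), h1, h2, h3,
          le_max_right |δ' i| |δ' i|]
      have ha := abs_le.mp hbi
      have h3 : (0:ℝ) ≤ 2 * b i := by linarith [abs_nonneg (δ' i)]
      split <;> apply div_nonneg <;> linarith
    nlinarith [Real.one_le_exp hε.le]
  · -- Δ > 0
    have hbpos : ∀ i, 0 < b i := by
      intro i
      have h1 := hb i
      have h2 : 0 < (1 + 1 / ε) * Δ := by positivity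
      have h3 : (0:ℝ) ≤ max |δ i| |δ' i| := le_trans (abs_nonneg _) (le_max_left _ _)
      linarith
    have hδab : ∀ i, |δ i| ≤ b i ∧ |δ' i| ≤ b i := by
      intro i
      have h1 := hb i
      have h2 : 0 < (1 + 1 / ε) * Δ := by positivity
      exact ⟨by linarith [le_max_left |δ i| |δ' i|], by linarith [le_max_right |δ i| |δ' i|]⟩
    have key : ∀ i, (if c i = 1 then (b i + δ' i) / (2 * b i) else (b i - δ' i) / (2 * b i))
        ≤ Real.exp (ε * |δ' i - δ i| / Δ) *
          (if c i = 1 then (b i + δ i) / (2 * b i) else (b i - δ i) / (2 * b i)) := by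
      intro i
      set v := |δ' i - δ i| with hv
      have hv0 : 0 ≤ v := abs_nonneg _
      have ht0 : 0 ≤ ε * v / Δ := by positivity
      have hexp : 1 + ε * v / Δ ≤ Real.exp (ε * v / Δ) := by
        linarith [Real.add_one_le_exp (ε * v / Δ)]
      have hbd := hb i
      have hd1 : |δ i| ≤ max |δ i| |δ' i| := le_max_left _ _
      have core : ∀ s : ℝ, s = 1 ∨ s = -1 →
          (b i + s * δ' i) / (2 * b i) ≤ Real.exp (ε * v / Δ) * ((b i + s * δ i) / (2 * b i)) := by
        intro s hs
        have hsδ : -|δ i| ≤ s * δ i ∧ s * δ i ≤ |δ i| := by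
          rcases hs with h | h <;> subst h <;> refine ⟨?_, ?_⟩ <;>
            nlinarith [neg_abs_le (δ i), le_abs_self (δ i)]
        have hA : (1 + 1/ε) * Δ ≤ b i + s * δ i := by
          have := hsδ.1; linarith [hd1]
        have hApos : 0 < b i + s * δ i := by
          have h2 : 0 < (1 + 1/ε) * Δ := by positivity
          linarith
        have hvs : s * δ' i - s * δ i ≤ v := by
          rcases hs with h | h <;> subst h <;>
            [linarith [le_abs_self (δ' i - δ i)]; linarith [neg_abs_le (δ' i - δ i)]]
        have hnum : b i + s * δ' i ≤ (1 + ε * v / Δ) * (b i + s * δ i) := by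
          have hΔε : Δ / ε ≤ b i + s * δ i := by
            have h1 : (1 + 1/ε) * Δ = Δ / ε + Δ := by field_simp; ring
            linarith [h1 ▸ hA]
          have hvle : v ≤ (ε * v / Δ) * (b i + s * δ i) := by
            have h1 : (ε * v / Δ) * (Δ / ε) = v := by field_simp
            calc v = (ε * v / Δ) * (Δ / ε) := h1.symm
              _ ≤ (ε * v / Δ) * (b i + s * δ i) :=
                  mul_le_mul_of_nonneg_left hΔε ht0
          nlinarith
        have h2b : 0 < 2 * b i := by linarith [hbpos i]
        rw [div_le_iff₀ h2b, mul_comm (Real.exp (ε * v / Δ)) _, div_mul_eq_mul_div,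
          div_mul_eq_mul_div, le_div_iff₀ h2b]
        have hmono : (1 + ε * v / Δ) * (b i + s * δ i) ≤ Real.exp (ε * v / Δ) * (b i + s * δ i) :=
          mul_le_mul_of_nonneg_right hexp hApos.le
        nlinarith
      rcases hc i with h | h
      · rw [h]; simp only [if_pos rfl]
        simpa using core 1 (Or.inl rfl)
      · rw [h]
        have hne : (-1:ℝ) ≠ 1 := by norm_num
        simp only [hne, if_false]
        have hco := core (-1) (Or.inr rfl)
        have e1 : b i + (-1) * δ' i = b i - δ' i := by ring
        have e2 : b i + (-1) * δ i = b i - δ i := by ring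
        rw [e1, e2] at hco
        exact hco
    have hnn : ∀ x : Fin d → ℝ, (∀ j, |x j| ≤ b j) →
        0 ≤ ∏ i, (if c i = 1 then (b i + x i) / (2 * b i) else (b i - x i) / (2 * b i)) := by
      intro x hx
      apply Finset.prod_nonneg
      intro i _
      have ha := abs_le.mp (hx i)
      have h3 : (0:ℝ) ≤ 2 * b i := by linarith [hbpos i]
      split <;> apply div_nonneg <;> linarith
    calc (∏ i, (if c i = 1 then (b i + δ' i) / (2 * b i) else (b i - δ' i) / (2 * b i)))
        ≤ ∏ i, (Real.exp (ε * |δ' i - δ i| / Δ) *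
            (if c i = 1 then (b i + δ i) / (2 * b i) else (b i - δ i) / (2 * b i))) := by
          apply Finset.prod_le_prod
          · intro i _
            have ha := abs_le.mp (hδab i).2
            have h3 : (0:ℝ) ≤ 2 * b i := by linarith [hbpos i]
            split <;> apply div_nonneg <;> linarith
          · intro i _; exact key i
      _ = Real.exp (∑ i, ε * |δ' i - δ i| / Δ) *
            ∏ i, (if c i = 1 then (b i + δ i) / (2 * b i) else (b i - δ i) / (2 * b i)) := by
          rw [Finset.prod_mul_distrib, Real.exp_sum]
      _ ≤ Real.exp ε *
            ∏ i, (if c i = 1 then (b i + δ i) / (2 * b i) else (b i - δ i) / (2 * b i)) := by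
          apply mul_le_mul_of_nonneg_right
          · apply Real.exp_le_exp.mpr
            have hsum : ∑ i, ε * |δ' i - δ i| / Δ = (ε / Δ) * ∑ i, |δ' i - δ i| := by
              rw [Finset.mul_sum]; congr 1; funext i; ring
            rw [hsum]
            calc (ε / Δ) * ∑ i, |δ' i - δ i| ≤ (ε / Δ) * Δ :=
                  mul_le_mul_of_nonneg_left hsens (by positivity)
              _ = ε := by field_simp
          · exact hnn δ fun j => (hδab j).1
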